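/- Let (M, ⊥) be a separoid, X_1, …, X_n ∈ M, and let G = (V, E) be the path graph with V = [n] and E = {{i, i+1} : i = 1, …, n−1}. Then the following are equivalent: (1) X_1, …, X_n form a Markov chain with respect to ⊥; (2) for all i = 1, …, n−1 one has X_{[i+1:n]} ⊥ X_{[i−1]} | X_i (where [i+1:n] = {i+1,…,n} and [i−1] = {1,…,i−1}); (3) X_1, …, X_n form a Markov random field with respect to ⊥ and G. -/

import Mathlib

namespace AMRF
/-- The separoid axioms (S1)–(S5) for a ternary relation `ind X Y Z` (read `X ⊥ Y | Z`)
on a commutative idempotent monoid. -/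
def IsSeparoid {M : Type*} [CommMonoid M] (ind : M → M → M → Prop) : Prop :=
  (∀ X Y Z : M, ind X Y Z → ind Y X Z) ∧
  (∀ W Y Z : M, W * Z = Z → ind W Y Z) ∧
  (∀ W X Y Z : M, ind (W * X) Y Z → ind X Y Z) ∧
  (∀ W X Y Z : M, ind (W * X) Y Z → ind W Y (X * Z)) ∧
  (∀ W X Y Z : M, ind W Y (X * Z) → ind X Y Z → ind (W * X) Y Z)
/-- The graph `G − U`: keep only edges with both endpoints outside `U`. -/
def delGraph {V : Type*} (G : SimpleGraph V) (U : Finset V) : SimpleGraph V where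
  Adj a b := G.Adj a b ∧ a ∉ U ∧ b ∉ U
  symm := ⟨fun _ _ h => ⟨h.1.symm, h.2.2, h.2.1⟩⟩
  loopless := ⟨fun _ h => G.irrefl h.1⟩

/-- `C` separates `A` from `B` in `G`: every walk from a vertex of `A` to a vertex of `B`
passes through some vertex of `C`. -/
def Separates {V : Type*} (G : SimpleGraph V) (A B C : Finset V) : Prop :=
  ∀ a ∈ A, ∀ b ∈ B, ∀ w : G.Walk a b, ∃ c ∈ C, c ∈ w.support

/-- `U` is a cutset: `G − U` has more than one connected component. -/
def IsCutset {V : Type*} (G : SimpleGraph V) (U : Finset V) : Prop :=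
  ∃ v w : V, v ∉ U ∧ w ∉ U ∧ ¬ (delGraph G U).Reachable v w

/-- `C` is (the vertex set of) a connected component of `G − U`. -/
def IsCompOf {V : Type*} (G : SimpleGraph V) (U C : Finset V) : Prop :=
  ∃ v, v ∉ U ∧ ∀ w, w ∈ C ↔ (delGraph G U).Reachable v w

/-- The global Markov property: `X₁, …, X_n` form a Markov random field with respect to the
independence relation `ind` and the graph `Gr`. -/
def IsMRF {M : Type*} [CommMonoid M] {n : ℕ} (ind : M → M → M → Prop)
    (Gr : SimpleGraph (Fin n)) (X : Fin n → M) : Prop :=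
  ∀ A B C : Finset (Fin n), Disjoint A B → Disjoint A C → Disjoint B C →
    Separates Gr A B C →
    ind (∏ a ∈ A, X a) (∏ b ∈ B, X b) (∏ c ∈ C, X c)

/-- `X₁, …, X_n` form a Markov chain with respect to `ind`:
`Xᵢ ⊥ X_{[i−2]} | X_{i−1}` for all `2 ≤ i ≤ n` (here with `0`-based indices:
for consecutive indices `j + 1 = i`, `Xᵢ` is independent of the product of all `X_k`
with `k < j`, given `X_j`). -/
def MarkovChainSep {M : Type*} [CommMonoid M] {n : ℕ} (ind : M → M → M → Prop)
    (X : Fin n → M) : Prop :=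
  ∀ i j : Fin n, (j : ℕ) + 1 = (i : ℕ) →
    ind (X i) (∏ k ∈ Finset.univ.filter (fun k => k < j), X k) (X j)

section Aux
variable {M : Type*} [CommMonoid M] {ind : M → M → M → Prop}

lemma sep_one_left (hsep : IsSeparoid ind) (Y Z : M) : ind 1 Y Z :=
  hsep.2.1 1 Y Z (one_mul Z)

lemma sep_one_right (hsep : IsSeparoid ind) (Y Z : M) : ind Y 1 Z :=
  hsep.1 _ _ _ (sep_one_left hsep Y Z)

lemma sep_mono_left (hsep : IsSeparoid ind) {ι : Type*} [DecidableEq ι]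
    {A A' : Finset ι} (h : A ⊆ A') (X : ι → M) {Y Z : M}
    (H : ind (∏ a ∈ A', X a) Y Z) : ind (∏ a ∈ A, X a) Y Z := by
  refine hsep.2.2.1 (∏ a ∈ A' \ A, X a) _ Y Z ?_
  rwa [Finset.prod_sdiff h]

lemma stepA (hsep : IsSeparoid ind) {n : ℕ} {X : Fin n → M}
    (hmc : MarkovChainSep ind X) (t : ℕ)
    (ih : ∀ A B C : Finset (Fin n),
      Disjoint A B → Disjoint A C → Disjoint B C →
      (∀ k : Fin n, (k ∈ A ∨ k ∈ B ∨ k ∈ C) ↔ (k : ℕ) < t) →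
      (∀ a ∈ A, ∀ b ∈ B, ∃ c ∈ C,
        min (a : ℕ) (b : ℕ) < (c : ℕ) ∧ (c : ℕ) < max (a : ℕ) (b : ℕ)) →
      ind (∏ a ∈ A, X a) (∏ b ∈ B, X b) (∏ c ∈ C, X c))
    (v : Fin n) (hv : (v : ℕ) = t)
    (A B C : Finset (Fin n))
    (dAB : Disjoint A B) (dAC : Disjoint A C) (dBC : Disjoint B C)
    (hU : ∀ k : Fin n, (k ∈ A ∨ k ∈ B ∨ k ∈ C) ↔ (k : ℕ) < t + 1)
    (hbtw : ∀ a ∈ A, ∀ b ∈ B, ∃ c ∈ C,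
      min (a : ℕ) (b : ℕ) < (c : ℕ) ∧ (c : ℕ) < max (a : ℕ) (b : ℕ))
    (hvA : v ∈ A) :
    ind (∏ a ∈ A, X a) (∏ b ∈ B, X b) (∏ c ∈ C, X c) := by
  classical
  obtain ⟨S1, S2, S3, S4, S5⟩ := hsep
  have hvB : v ∉ B := Finset.disjoint_left.mp dAB hvA
  have hvC : v ∉ C := Finset.disjoint_left.mp dAC hvA
  have hprodA : X v * ∏ a ∈ A.erase v, X a = ∏ a ∈ A, X a :=
    Finset.mul_prod_erase A X hvA
  have hval : ∀ k : Fin n, k ≠ v → (k ∈ A ∨ k ∈ B ∨ k ∈ C) → (k : ℕ) < t := by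
    intro k hk hm
    have h1 := (hU k).mp hm
    have h2 : (k : ℕ) ≠ t := fun h => hk (Fin.ext (h.trans hv.symm))
    omega
  have hU0 : ∀ k : Fin n, (k ∈ A.erase v ∨ k ∈ B ∨ k ∈ C) ↔ (k : ℕ) < t := by
    intro k
    constructor
    · rintro (hk | hk | hk)
      · exact hval k (Finset.ne_of_mem_erase hk) (Or.inl (Finset.mem_of_mem_erase hk))
      · refine hval k ?_ (Or.inr (Or.inl hk)); rintro rfl; exact hvB hk
      · refine hval k ?_ (Or.inr (Or.inr hk)); rintro rfl; exact hvC hk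
    · intro hk
      have hkv : k ≠ v := by
        intro h; rw [h] at hk; omega
      rcases (hU k).mpr (by omega) with h | h | h
      · exact Or.inl (Finset.mem_erase.mpr ⟨hkv, h⟩)
      · exact Or.inr (Or.inl h)
      · exact Or.inr (Or.inr h)
  have dA0B : Disjoint (A.erase v) B := dAB.mono_left (Finset.erase_subset _ _)
  have dA0C : Disjoint (A.erase v) C := dAC.mono_left (Finset.erase_subset _ _)
  have hii := ih (A.erase v) B C dA0B dA0C dBC hU0
    (fun a ha b hb => hbtw a (Finset.mem_of_mem_erase ha) b hb)
  by_cases hB : B = ∅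
  · rw [hB, Finset.prod_empty]
    exact S1 _ _ _ (S2 _ _ _ (one_mul _))
  · have hBne : B.Nonempty := Finset.nonempty_iff_ne_empty.mpr hB
    have hBlt : ∀ b ∈ B, (b : ℕ) + 1 < t := by
      intro b hb
      obtain ⟨c, hc, hc1, hc2⟩ := hbtw v hvA b hb
      have hbv : b ≠ v := fun h => hvB (h ▸ hb)
      have hbt : (b : ℕ) < t := hval b hbv (Or.inr (Or.inl hb))
      have hct : (c : ℕ) < t := by
        refine hval c ?_ (Or.inr (Or.inr hc))
        intro h; exact hvC (h ▸ hc)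
      omega
    obtain ⟨b0, hb0⟩ := hBne
    have ht2 : 2 ≤ t := by have := hBlt b0 hb0; omega
    have htn : t - 1 < n := by have := v.isLt; omega
    obtain ⟨u, hu⟩ : ∃ u : Fin n, (u : ℕ) = t - 1 := ⟨⟨t - 1, htn⟩, rfl⟩
    have hmcv := hmc v u (by omega)
    have hBS : B ⊆ Finset.univ.filter (fun k => k < u) := by
      intro b hb
      simp only [Finset.mem_filter, Finset.mem_univ, true_and, Fin.lt_def]
      have := hBlt b hb; omega
    have huB : u ∉ B := by
      intro h
      have := hBlt u h; omega
    have h1 : ind ((∏ k ∈ Finset.univ.filter (fun k => k < u) \ B, X k) * ∏ k ∈ B, X k)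
        (X v) (X u) := by
      rw [Finset.prod_sdiff hBS]
      exact S1 _ _ _ hmcv
    have h2 : ind (∏ k ∈ B, X k) (X v)
        ((∏ k ∈ Finset.univ.filter (fun k => k < u) \ B, X k) * X u) :=
      S4 _ _ _ _ (by rwa [mul_comm] at h1)
    have hAC : ∀ k : Fin n, (k ∈ A.erase v ∨ k ∈ C) ↔ ((k : ℕ) < t ∧ k ∉ B) := by
      intro k
      constructor
      · rintro (h | h)
        · exact ⟨(hU0 k).mp (Or.inl h), fun hB' => Finset.disjoint_left.mp dA0B h hB'⟩
        · exact ⟨(hU0 k).mp (Or.inr (Or.inr h)), fun hB' => Finset.disjoint_left.mp dBC hB' h⟩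
      · rintro ⟨hk, hkB⟩
        rcases (hU0 k).mpr hk with h | h | h
        · exact Or.inl h
        · exact absurd h hkB
        · exact Or.inr h
    have huS : u ∉ Finset.univ.filter (fun k => k < u) \ B := by
      simp [Finset.mem_sdiff]
    have hins : insert u (Finset.univ.filter (fun k => k < u) \ B) = A.erase v ∪ C := by
      ext k
      rw [Finset.mem_union, hAC k]
      simp only [Finset.mem_insert, Finset.mem_sdiff, Finset.mem_filter, Finset.mem_univ,
        true_and, Fin.lt_def]
      constructor
      · rintro (rfl | ⟨hk, hkB⟩)
        · exact ⟨by omega, huB⟩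
        · exact ⟨by omega, hkB⟩
      · rintro ⟨hk, hkB⟩
        by_cases hke : k = u
        · exact Or.inl hke
        · have : (k : ℕ) ≠ (u : ℕ) := fun h => hke (Fin.ext h)
          exact Or.inr ⟨by omega, hkB⟩
    have hDu : (∏ k ∈ Finset.univ.filter (fun k => k < u) \ B, X k) * X u
        = (∏ a ∈ A.erase v, X a) * ∏ c ∈ C, X c := by
      rw [mul_comm, ← Finset.prod_insert huS, hins, Finset.prod_union dA0C]
    rw [hDu] at h2
    have h3 := S1 _ _ _ h2
    rw [← hprodA]
    exact S5 _ _ _ _ h3 hii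

lemma core (hsep : IsSeparoid ind) {n : ℕ} {X : Fin n → M}
    (hmc : MarkovChainSep ind X) :
    ∀ t : ℕ, ∀ A B C : Finset (Fin n),
      Disjoint A B → Disjoint A C → Disjoint B C →
      (∀ k : Fin n, (k ∈ A ∨ k ∈ B ∨ k ∈ C) ↔ (k : ℕ) < t) →
      (∀ a ∈ A, ∀ b ∈ B, ∃ c ∈ C,
        min (a : ℕ) (b : ℕ) < (c : ℕ) ∧ (c : ℕ) < max (a : ℕ) (b : ℕ)) →
      ind (∏ a ∈ A, X a) (∏ b ∈ B, X b) (∏ c ∈ C, X c) := by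
  classical
  intro t
  induction t with
  | zero =>
    intro A B C dAB dAC dBC hU hbtw
    have hA : A = ∅ := Finset.eq_empty_of_forall_notMem fun k hk => by
      have := (hU k).mp (Or.inl hk); omega
    rw [hA, Finset.prod_empty]
    exact sep_one_left hsep _ _
  | succ t iht =>
    intro A B C dAB dAC dBC hU hbtw
    by_cases hex : ∃ v : Fin n, (v : ℕ) = t
    · obtain ⟨v, hv⟩ := hex
      have ihswap : ∀ A' B' C' : Finset (Fin n),
          Disjoint A' B' → Disjoint A' C' → Disjoint B' C' →
          (∀ k : Fin n, (k ∈ A' ∨ k ∈ B' ∨ k ∈ C') ↔ (k : ℕ) < t) →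
          (∀ a ∈ A', ∀ b ∈ B', ∃ c ∈ C',
            min (a : ℕ) (b : ℕ) < (c : ℕ) ∧ (c : ℕ) < max (a : ℕ) (b : ℕ)) →
          ind (∏ a ∈ A', X a) (∏ b ∈ B', X b) (∏ c ∈ C', X c) := by
        intro A' B' C' d1 d2 d3 h4 h5
        refine hsep.1 _ _ _ (iht B' A' C' d1.symm d3 d2 (fun k => by rw [← h4 k]; tauto) ?_)
        intro b hb a ha
        obtain ⟨c, hc, hc1, hc2⟩ := h5 a ha b hb
        exact ⟨c, hc, by omega, by omega⟩
      by_cases hvA : v ∈ A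
      · exact stepA hsep hmc t iht v hv A B C dAB dAC dBC hU hbtw hvA
      by_cases hvB : v ∈ B
      · refine hsep.1 _ _ _ (stepA hsep hmc t ihswap v hv B A C dAB.symm dBC dAC
          (fun k => by rw [← hU k]; tauto) ?_ hvB)
        intro b hb a ha
        obtain ⟨c, hc, hc1, hc2⟩ := hbtw a ha b hb
        exact ⟨c, hc, by omega, by omega⟩
      · have hvC : v ∈ C := by
          rcases (hU v).mpr (by omega) with h | h | h
          · exact absurd h hvA
          · exact absurd h hvB
          · exact h
        by_cases hA : A = ∅
        · rw [hA, Finset.prod_empty]; exact sep_one_left hsep _ _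
        by_cases hBe : B = ∅
        · rw [hBe, Finset.prod_empty]; exact sep_one_right hsep _ _
        have hAne : A.Nonempty := Finset.nonempty_iff_ne_empty.mpr hA
        have hABne : (A ∪ B).Nonempty := by
          obtain ⟨a, ha⟩ := hAne
          exact ⟨a, Finset.mem_union_left _ ha⟩
        have hmmem := (A ∪ B).max'_mem hABne
        set m := (A ∪ B).max' hABne with hm
        have hmax : ∀ x ∈ A ∪ B, (x : ℕ) ≤ (m : ℕ) :=
          fun x hx => Fin.le_def.mp (Finset.le_max' _ x hx)
        have hvnA : v ∉ A := hvA
        have hvnB : v ∉ B := hvB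
        have hltt : ∀ k : Fin n, (k ∈ A ∨ k ∈ B) → (k : ℕ) < t := by
          intro k hk
          have h1 : (k : ℕ) < t + 1 := (hU k).mp (by tauto)
          have h2 : k ≠ v := by
            rintro rfl
            rcases hk with h | h
            · exact hvnA h
            · exact hvnB h
          have h3 : (k : ℕ) ≠ (v : ℕ) := fun h => h2 (Fin.ext h)
          omega
        have hprodC : X v * ∏ c ∈ C.erase v, X c = ∏ c ∈ C, X c :=
          Finset.mul_prod_erase C X hvC
        have hvC0 : v ∉ C.erase v := Finset.notMem_erase v C
        have hU' : ∀ k : Fin n, (k ∈ insert v A ∨ k ∈ B ∨ k ∈ C.erase v) ↔ (k : ℕ) < t + 1 := by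
          intro k
          by_cases hk : k = v
          · subst hk
            constructor
            · intro _; omega
            · intro _; exact Or.inl (Finset.mem_insert_self _ _)
          · simp only [Finset.mem_insert, Finset.mem_erase, hk, false_or, ne_eq,
              not_false_eq_true, true_and]
            exact hU k
        have hbtwA : ∀ a ∈ A, ∀ b ∈ B, ∃ c ∈ C.erase v,
            min (a : ℕ) (b : ℕ) < (c : ℕ) ∧ (c : ℕ) < max (a : ℕ) (b : ℕ) := by
          intro a ha b hb
          obtain ⟨c, hc, h1, h2⟩ := hbtw a ha b hb
          have h3 := hltt a (Or.inl ha)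
          have h4 := hltt b (Or.inr hb)
          have hcv : c ≠ v := by
            intro h
            rw [h, hv] at h2
            omega
          exact ⟨c, Finset.mem_erase.mpr ⟨hcv, hc⟩, h1, h2⟩
        rcases Finset.mem_union.mp hmmem with hmA | hmB
        · -- the max of A ∪ B lies in A : put v on the A side
          have hbtw' : ∀ a ∈ insert v A, ∀ b ∈ B, ∃ c ∈ C.erase v,
              min (a : ℕ) (b : ℕ) < (c : ℕ) ∧ (c : ℕ) < max (a : ℕ) (b : ℕ) := by
            intro a ha b hb
            rcases Finset.mem_insert.mp ha with rfl | haA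
            · obtain ⟨c, hc, h1, h2⟩ := hbtw m hmA b hb
              have hmt := hltt m (Or.inl hmA)
              have hbt := hltt b (Or.inr hb)
              have hble : (b : ℕ) ≤ (m : ℕ) := hmax b (Finset.mem_union_right _ hb)
              have hbm : b ≠ m := by
                rintro rfl; exact Finset.disjoint_left.mp dAB hmA hb
              have hbm' : (b : ℕ) ≠ (m : ℕ) := fun h => hbm (Fin.ext h)
              refine ⟨c, Finset.mem_erase.mpr ⟨fun hce => ?_, hc⟩, by omega, by omega⟩
              rw [hce] at h2
              omega
            · exact hbtwA _ haA b hb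
          have hstep := stepA hsep hmc t iht v hv (insert v A) B (C.erase v)
            ((Finset.disjoint_insert_left).mpr ⟨hvnB, dAB⟩)
            ((Finset.disjoint_insert_left).mpr ⟨hvC0, dAC.mono_right (Finset.erase_subset _ _)⟩)
            (dBC.mono_right (Finset.erase_subset _ _))
            hU' hbtw' (Finset.mem_insert_self _ _)
          rw [Finset.prod_insert hvnA] at hstep
          have h6 := hsep.2.2.2.1 _ _ _ _ (by rwa [mul_comm] at hstep)
          rwa [hprodC] at h6
        · -- the max lies in B : put v on the B side
          have hU'' : ∀ k : Fin n, (k ∈ insert v B ∨ k ∈ A ∨ k ∈ C.erase v) ↔ (k : ℕ) < t + 1 :=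
            fun k => by rw [← hU' k]; simp only [Finset.mem_insert]; tauto
          have hbtw'' : ∀ b ∈ insert v B, ∀ a ∈ A, ∃ c ∈ C.erase v,
              min (b : ℕ) (a : ℕ) < (c : ℕ) ∧ (c : ℕ) < max (b : ℕ) (a : ℕ) := by
            intro b hb a ha
            rcases Finset.mem_insert.mp hb with rfl | hbB
            · obtain ⟨c, hc, h1, h2⟩ := hbtw a ha m hmB
              have hmt := hltt m (Or.inr hmB)
              have hat := hltt a (Or.inl ha)
              have hale : (a : ℕ) ≤ (m : ℕ) := hmax a (Finset.mem_union_left _ ha)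
              have ham : a ≠ m := by
                rintro rfl; exact Finset.disjoint_left.mp dAB ha hmB
              have ham' : (a : ℕ) ≠ (m : ℕ) := fun h => ham (Fin.ext h)
              refine ⟨c, Finset.mem_erase.mpr ⟨fun hce => ?_, hc⟩, by omega, by omega⟩
              rw [hce] at h2
              omega
            · obtain ⟨c, hc, h1, h2⟩ := hbtwA a ha b hbB
              exact ⟨c, hc, by omega, by omega⟩
          have hstep := stepA hsep hmc t ihswap v hv (insert v B) A (C.erase v)
            ((Finset.disjoint_insert_left).mpr ⟨hvnA, dAB.symm⟩)
            ((Finset.disjoint_insert_left).mpr ⟨hvC0, dBC.mono_right (Finset.erase_subset _ _)⟩)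
            (dAC.mono_right (Finset.erase_subset _ _))
            hU'' hbtw'' (Finset.mem_insert_self _ _)
          rw [Finset.prod_insert hvnB] at hstep
          have h6 := hsep.2.2.2.1 _ _ _ _ (by rwa [mul_comm] at hstep)
          rw [hprodC] at h6
          exact hsep.1 _ _ _ h6
    · have hnt : ∀ k : Fin n, (k : ℕ) ≠ t := fun k h => hex ⟨k, h⟩
      refine iht A B C dAB dAC dBC (fun k => ?_) hbtw
      rw [hU k]
      have := hnt k
      omega

end Aux

section Walks
variable {n : ℕ} {Gr : SimpleGraph (Fin n)}

lemma exists_mono_walk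
    (hGr : ∀ i j : Fin n, Gr.Adj i j ↔ ((i : ℕ) + 1 = (j : ℕ) ∨ (j : ℕ) + 1 = (i : ℕ))) :
    ∀ (d : ℕ) (a b : Fin n), (a : ℕ) ≤ (b : ℕ) → (b : ℕ) - (a : ℕ) = d →
      ∃ w : Gr.Walk a b, ∀ x ∈ w.support, (a : ℕ) ≤ (x : ℕ) ∧ (x : ℕ) ≤ (b : ℕ) := by
  intro d
  induction d with
  | zero =>
    intro a b hab hd
    have hab' : a = b := Fin.ext (by omega)
    subst hab'
    refine ⟨SimpleGraph.Walk.nil, ?_⟩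
    intro x hx
    rw [SimpleGraph.Walk.support_nil, List.mem_singleton] at hx
    subst hx
    omega
  | succ d ihd =>
    intro a b hab hd
    have han : (a : ℕ) + 1 < n := by have := b.isLt; omega
    obtain ⟨a', ha'⟩ : ∃ a' : Fin n, (a' : ℕ) = (a : ℕ) + 1 := ⟨⟨(a : ℕ) + 1, han⟩, rfl⟩
    have hadj : Gr.Adj a a' := (hGr a a').mpr (Or.inl ha'.symm)
    obtain ⟨w, hw⟩ := ihd a' b (by omega) (by omega)
    refine ⟨SimpleGraph.Walk.cons hadj w, ?_⟩
    intro x hx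
    rw [SimpleGraph.Walk.support_cons, List.mem_cons] at hx
    rcases hx with rfl | hx
    · omega
    · have := hw x hx; omega

lemma walk_cross
    (hGr : ∀ i j : Fin n, Gr.Adj i j ↔ ((i : ℕ) + 1 = (j : ℕ) ∨ (j : ℕ) + 1 = (i : ℕ)))
    (j : Fin n) {a b : Fin n} (w : Gr.Walk a b) :
    (b : ℕ) < (j : ℕ) → (j : ℕ) < (a : ℕ) → j ∈ w.support := by
  induction w with
  | nil => intro h1 h2; omega
  | @cons u v b' h p ihp =>
    intro h1 h2
    have hadj := (hGr u v).mp h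
    rw [SimpleGraph.Walk.support_cons, List.mem_cons]
    by_cases hvj : v = j
    · subst hvj
      exact Or.inr p.start_mem_support
    · have hvj' : (v : ℕ) ≠ (j : ℕ) := fun hh => hvj (Fin.ext hh)
      exact Or.inr (ihp h1 (by omega))

lemma sep_between
    (hGr : ∀ i j : Fin n, Gr.Adj i j ↔ ((i : ℕ) + 1 = (j : ℕ) ∨ (j : ℕ) + 1 = (i : ℕ)))
    {A B C : Finset (Fin n)} (hS : Separates Gr A B C)
    (dAB : Disjoint A B) (dAC : Disjoint A C) (dBC : Disjoint B C)
    {a b : Fin n} (ha : a ∈ A) (hb : b ∈ B) :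
    ∃ c ∈ C, min (a : ℕ) (b : ℕ) < (c : ℕ) ∧ (c : ℕ) < max (a : ℕ) (b : ℕ) := by
  have hab : a ≠ b := fun h => Finset.disjoint_left.mp dAB ha (h ▸ hb)
  have hab' : (a : ℕ) ≠ (b : ℕ) := fun h => hab (Fin.ext h)
  rcases le_or_gt (a : ℕ) (b : ℕ) with h | h
  · obtain ⟨w, hw⟩ := exists_mono_walk hGr _ a b h rfl
    obtain ⟨c, hc, hcw⟩ := hS a ha b hb w
    have hbd := hw c hcw
    have h1 : (c : ℕ) ≠ (a : ℕ) := fun hh =>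
      Finset.disjoint_left.mp dAC ha ((Fin.ext hh : c = a) ▸ hc)
    have h2 : (c : ℕ) ≠ (b : ℕ) := fun hh =>
      Finset.disjoint_left.mp dBC hb ((Fin.ext hh : c = b) ▸ hc)
    exact ⟨c, hc, by omega, by omega⟩
  · obtain ⟨w, hw⟩ := exists_mono_walk hGr _ b a (le_of_lt h) rfl
    obtain ⟨c, hc, hcw⟩ := hS a ha b hb w.reverse
    have hcw' : c ∈ w.support := by
      rwa [SimpleGraph.Walk.support_reverse, List.mem_reverse] at hcw
    have hbd := hw c hcw'
    have h1 : (c : ℕ) ≠ (a : ℕ) := fun hh =>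
      Finset.disjoint_left.mp dAC ha ((Fin.ext hh : c = a) ▸ hc)
    have h2 : (c : ℕ) ≠ (b : ℕ) := fun hh =>
      Finset.disjoint_left.mp dBC hb ((Fin.ext hh : c = b) ▸ hc)
    exact ⟨c, hc, by omega, by omega⟩

end Walks

/-- For `X₁, …, X_n` in a separoid and the path graph `Gr` on `[n]`,
the following are equivalent: (1) `X₁ → ⋯ → X_n` is a Markov chain;
(2) `X_{[i+1:n]} ⊥ X_{[i−1]} | Xᵢ` for all `i = 1, …, n−1`;
(3) `X₁, …, X_n` form a Markov random field with respect to `⊥` and `Gr`. -/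
theorem markov_chain_characterization
    {M : Type*} [CommMonoid M] (hidem : ∀ x : M, x * x = x)
    (ind : M → M → M → Prop) (hsep : IsSeparoid ind)
    (n : ℕ) (X : Fin n → M)
    (Gr : SimpleGraph (Fin n))
    (hGr : ∀ i j : Fin n, Gr.Adj i j ↔ ((i : ℕ) + 1 = (j : ℕ) ∨ (j : ℕ) + 1 = (i : ℕ))) :
    List.TFAE
      [ MarkovChainSep ind X,
        ∀ i : Fin n, (i : ℕ) + 2 ≤ n →
          ind (∏ k ∈ Finset.univ.filter (fun k => i < k), X k)
            (∏ k ∈ Finset.univ.filter (fun k => k < i), X k) (X i),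
        IsMRF ind Gr X ] := by
  classical
  tfae_have 1 → 2 := by
    intro hmc i _
    have h := core hsep hmc n (Finset.univ.filter (fun k => i < k))
      (Finset.univ.filter (fun k => k < i)) {i}
      (by
        rw [Finset.disjoint_left]
        intro k hk hk'
        simp only [Finset.mem_filter, Finset.mem_univ, true_and, Fin.lt_def] at hk hk'
        omega)
      (by
        rw [Finset.disjoint_left]
        intro k hk hk'
        simp only [Finset.mem_filter, Finset.mem_univ, true_and, Fin.lt_def] at hk
        rw [Finset.mem_singleton] at hk'
        subst hk'
        omega)
      (by
        rw [Finset.disjoint_left]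
        intro k hk hk'
        simp only [Finset.mem_filter, Finset.mem_univ, true_and, Fin.lt_def] at hk
        rw [Finset.mem_singleton] at hk'
        subst hk'
        omega)
      (by
        intro k
        simp only [Finset.mem_filter, Finset.mem_univ, true_and, Finset.mem_singleton,
          Fin.lt_def, Fin.ext_iff]
        have := k.isLt
        omega)
      (by
        intro a ha b hb
        simp only [Finset.mem_filter, Finset.mem_univ, true_and, Fin.lt_def] at ha hb
        exact ⟨i, Finset.mem_singleton_self i, by omega, by omega⟩)
    simpa using h
  tfae_have 2 → 1 := by
    intro h2 i j hij
    have h := h2 j (by have := i.isLt; omega)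
    have hfil : Finset.univ.filter (fun k => j < k)
        = insert i (Finset.univ.filter (fun k => i < k)) := by
      ext k
      simp only [Finset.mem_filter, Finset.mem_univ, true_and, Finset.mem_insert,
        Fin.lt_def, Fin.ext_iff]
      omega
    rw [hfil, Finset.prod_insert (by
      simp only [Finset.mem_filter, Finset.mem_univ, true_and]
      exact fun hh => lt_irrefl _ hh)] at h
    exact hsep.2.2.1 _ _ _ _ (by rwa [mul_comm] at h)
  tfae_have 1 → 3 := by
    intro hmc A B C dAB dAC dBC hsepr
    set A' : Finset (Fin n) := Finset.univ.filter (fun k => k ∉ C ∧ ∀ b ∈ B, ∃ c ∈ C,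
      min (k : ℕ) (b : ℕ) < (c : ℕ) ∧ (c : ℕ) < max (k : ℕ) (b : ℕ)) with hA'
    set B' : Finset (Fin n) := (Finset.univ \ C) \ A' with hB'
    have hAA' : A ⊆ A' := by
      intro a ha
      simp only [hA', Finset.mem_filter, Finset.mem_univ, true_and]
      exact ⟨Finset.disjoint_left.mp dAC ha,
        fun b hb => sep_between hGr hsepr dAB dAC dBC ha hb⟩
    have hBB' : B ⊆ B' := by
      intro b hb
      simp only [hB', Finset.mem_sdiff, Finset.mem_univ, true_and, hA', Finset.mem_filter]
      refine ⟨Finset.disjoint_left.mp dBC hb, ?_⟩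
      rintro ⟨-, hall⟩
      obtain ⟨c, hc, hc1, hc2⟩ := hall b hb
      omega
    have dA'C : Disjoint A' C := by
      rw [Finset.disjoint_left]
      intro k hk
      simp only [hA', Finset.mem_filter, Finset.mem_univ, true_and] at hk
      exact hk.1
    have dB'C : Disjoint B' C := by
      rw [Finset.disjoint_left]
      intro k hk
      simp only [hB', Finset.mem_sdiff, Finset.mem_univ, true_and] at hk
      exact hk.1
    have dA'B' : Disjoint A' B' := by
      rw [Finset.disjoint_left]
      intro k hk hk'
      simp only [hB', Finset.mem_sdiff] at hk'
      exact hk'.2 hk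
    have hU : ∀ k : Fin n, (k ∈ A' ∨ k ∈ B' ∨ k ∈ C) ↔ (k : ℕ) < n := by
      intro k
      constructor
      · intro _; exact k.isLt
      · intro _
        by_cases h1 : k ∈ C
        · exact Or.inr (Or.inr h1)
        by_cases h2 : k ∈ A'
        · exact Or.inl h2
        · refine Or.inr (Or.inl ?_)
          simp only [hB', Finset.mem_sdiff, Finset.mem_univ, true_and]
          exact ⟨h1, h2⟩
    have hbtwAB : ∀ a ∈ A', ∀ b ∈ B', ∃ c ∈ C,
        min (a : ℕ) (b : ℕ) < (c : ℕ) ∧ (c : ℕ) < max (a : ℕ) (b : ℕ) := by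
      intro a ha b hb
      simp only [hA', Finset.mem_filter, Finset.mem_univ, true_and] at ha
      simp only [hB', Finset.mem_sdiff, Finset.mem_univ, true_and, hA',
        Finset.mem_filter] at hb
      obtain ⟨hbC, hbA⟩ := hb
      have hnotall : ¬ ∀ b' ∈ B, ∃ c ∈ C,
          min (b : ℕ) (b' : ℕ) < (c : ℕ) ∧ (c : ℕ) < max (b : ℕ) (b' : ℕ) :=
        fun hh => hbA ⟨hbC, hh⟩
      push_neg at hnotall
      obtain ⟨b0, hb0, hnc⟩ := hnotall
      obtain ⟨c1, hc1, h1, h2⟩ := ha.2 b0 hb0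
      by_contra hno
      push_neg at hno
      have hx1 := hno c1 hc1
      have hx2 := hnc c1 hc1
      have hbc1 : (b : ℕ) ≠ (c1 : ℕ) := fun h => hbC ((Fin.ext h : b = c1) ▸ hc1)
      omega
    have hcore := core hsep hmc n A' B' C dA'B' dA'C dB'C hU hbtwAB
    have h1 := sep_mono_left hsep hAA' X hcore
    have h2 := hsep.1 _ _ _ h1
    have h3 := sep_mono_left hsep hBB' X h2
    exact hsep.1 _ _ _ h3
  tfae_have 3 → 1 := by
    intro hmrf i j hij
    have h := hmrf {i} (Finset.univ.filter (fun k => k < j)) {j}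
      (by
        rw [Finset.disjoint_left]
        intro k hk hk'
        rw [Finset.mem_singleton] at hk
        subst hk
        simp only [Finset.mem_filter, Finset.mem_univ, true_and, Fin.lt_def] at hk'
        omega)
      (by
        rw [Finset.disjoint_left]
        intro k hk hk'
        rw [Finset.mem_singleton] at hk hk'
        subst hk
        rw [Fin.ext_iff] at hk'
        omega)
      (by
        rw [Finset.disjoint_left]
        intro k hk hk'
        simp only [Finset.mem_filter, Finset.mem_univ, true_and, Fin.lt_def] at hk
        rw [Finset.mem_singleton] at hk'
        subst hk'
        omega)
      (by
        intro a ha b hb w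
        rw [Finset.mem_singleton] at ha
        subst ha
        simp only [Finset.mem_filter, Finset.mem_univ, true_and, Fin.lt_def] at hb
        exact ⟨j, Finset.mem_singleton_self j, walk_cross hGr j w hb (by omega)⟩)
    simpa using h
  tfae_finish

end AMRF
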